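/- Let γ ∈ ℝ, A ∈ ℝ^{n×n}, B ∈ ℝ^{n×r}, C ∈ ℝ^{r×n}, and let P, P_c, E, E_c ∈ ℝ^{n×n} be symmetric matrices such that γ·I − BᵀEB and γ·I − BᵀE_cB are invertible. Define F = −(γI − BᵀEB)⁻¹ BᵀEA, F_c = −(γI − BᵀE_cB)⁻¹ BᵀE_cA, W = P − AᵀEA − CᵀC − AᵀEB(γI − BᵀEB)⁻¹BᵀEA, and W_c = P_c − AᵀE_cA − CᵀC − AᵀE_cB(γI − BᵀE_cB)⁻¹BᵀE_cA. Then W_c − W = −[(P − P_c) − (A − BF)ᵀ(E − E_c)(A − BF)] − (F_c − F)ᵀ(γI − BᵀE_cB)(F_c − F). -/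
import Mathlib


open Matrix

noncomputable section

/-- The feedback gain `F = -(γI - BᵀEB)⁻¹ Bᵀ E A`. -/
def Fgain {n r : ℕ} (γ : ℝ) (A : Matrix (Fin n) (Fin n) ℝ) (B : Matrix (Fin n) (Fin r) ℝ)
    (E : Matrix (Fin n) (Fin n) ℝ) : Matrix (Fin r) (Fin n) ℝ :=
  -((γ • (1 : Matrix (Fin r) (Fin r) ℝ) - Bᵀ * E * B)⁻¹ * (Bᵀ * E * A))

/-- The Riccati-type operator value
`W = P - AᵀEA - CᵀC - AᵀEB (γI - BᵀEB)⁻¹ BᵀEA`. -/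
def Wop {n r : ℕ} (γ : ℝ) (A P E : Matrix (Fin n) (Fin n) ℝ) (B : Matrix (Fin n) (Fin r) ℝ)
    (C : Matrix (Fin r) (Fin n) ℝ) : Matrix (Fin n) (Fin n) ℝ :=
  P - Aᵀ * E * A - Cᵀ * C -
    Aᵀ * E * B * (γ • (1 : Matrix (Fin r) (Fin r) ℝ) - Bᵀ * E * B)⁻¹ * (Bᵀ * E * A)


theorem riccati_aux {n r : ℕ} (A P Pc E Ec : Matrix (Fin n) (Fin n) ℝ)
    (B : Matrix (Fin n) (Fin r) ℝ) (C : Matrix (Fin r) (Fin n) ℝ)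
    (F Fc : Matrix (Fin r) (Fin n) ℝ) (S Sc G : Matrix (Fin r) (Fin r) ℝ)
    (h1 : Bᵀ*E*A = -(S * F)) (h2 : Aᵀ*E*B = -(Fᵀ*S))
    (h3 : Bᵀ*Ec*A = -(Sc*Fc)) (h4 : Aᵀ*Ec*B = -(Fcᵀ*Sc))
    (h5 : Bᵀ*E*B = G - S) (h6 : Bᵀ*Ec*B = G - Sc) :
    (Pc - Aᵀ*Ec*A - Cᵀ*C + Aᵀ*Ec*B*Fc) - (P - Aᵀ*E*A - Cᵀ*C + Aᵀ*E*B*F)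
     = -((P-Pc) - (A - B*F)ᵀ*(E-Ec)*(A-B*F)) - (Fc-F)ᵀ*Sc*(Fc-F) := by
  have hexp : (A - B*F)ᵀ*(E-Ec)*(A-B*F)
      = Aᵀ*E*A - Aᵀ*Ec*A - (Aᵀ*E*B)*F + (Aᵀ*Ec*B)*F - Fᵀ*(Bᵀ*E*A) + Fᵀ*(Bᵀ*Ec*A)
        + Fᵀ*((Bᵀ*E*B)*F) - Fᵀ*((Bᵀ*Ec*B)*F) := by
    simp only [transpose_sub, transpose_mul, Matrix.sub_mul, Matrix.mul_sub, Matrix.mul_assoc]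
    abel
  have hcross : (Fc-F)ᵀ*Sc*(Fc-F)
      = Fcᵀ*(Sc*Fc) - Fcᵀ*(Sc*F) - Fᵀ*(Sc*Fc) + Fᵀ*(Sc*F) := by
    simp only [transpose_sub, Matrix.sub_mul, Matrix.mul_sub, Matrix.mul_assoc]
    abel
  rw [hexp, hcross, h1, h2, h3, h4, h5, h6]
  simp only [Matrix.sub_mul, Matrix.mul_sub, Matrix.mul_neg, Matrix.neg_mul, Matrix.mul_assoc]
  abel

lemma Wop_eq {n r : ℕ} (γ : ℝ) (A P E : Matrix (Fin n) (Fin n) ℝ) (B : Matrix (Fin n) (Fin r) ℝ)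
    (C : Matrix (Fin r) (Fin n) ℝ) :
    Wop γ A P E B C = P - Aᵀ * E * A - Cᵀ * C + Aᵀ * E * B * Fgain γ A B E := by
  rw [Wop, Fgain, Matrix.mul_neg, Matrix.mul_assoc (Aᵀ * E * B)]
  rw [← sub_eq_add_neg]

lemma key1 {n r : ℕ} (γ : ℝ) (A E : Matrix (Fin n) (Fin n) ℝ) (B : Matrix (Fin n) (Fin r) ℝ)
    (hinv : IsUnit (γ • (1 : Matrix (Fin r) (Fin r) ℝ) - Bᵀ * E * B)) :
    Bᵀ * E * A = -((γ • (1 : Matrix (Fin r) (Fin r) ℝ) - Bᵀ * E * B) * Fgain γ A B E) := by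
  rw [Fgain, Matrix.mul_neg, neg_neg, ← Matrix.mul_assoc,
    Matrix.mul_nonsing_inv _ ((Matrix.isUnit_iff_isUnit_det _).mp hinv), Matrix.one_mul]

lemma Ssymm {n r : ℕ} (γ : ℝ) (E : Matrix (Fin n) (Fin n) ℝ) (B : Matrix (Fin n) (Fin r) ℝ)
    (hE : E.IsSymm) :
    (γ • (1 : Matrix (Fin r) (Fin r) ℝ) - Bᵀ * E * B)ᵀ =
      γ • (1 : Matrix (Fin r) (Fin r) ℝ) - Bᵀ * E * B := by
  rw [transpose_sub, transpose_smul, transpose_one, transpose_mul, transpose_mul,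
    transpose_transpose, hE.eq, Matrix.mul_assoc]

lemma key2 {n r : ℕ} (γ : ℝ) (A E : Matrix (Fin n) (Fin n) ℝ) (B : Matrix (Fin n) (Fin r) ℝ)
    (hE : E.IsSymm)
    (hinv : IsUnit (γ • (1 : Matrix (Fin r) (Fin r) ℝ) - Bᵀ * E * B)) :
    Aᵀ * E * B = -((Fgain γ A B E)ᵀ * (γ • (1 : Matrix (Fin r) (Fin r) ℝ) - Bᵀ * E * B)) := by
  have := congrArg transpose (key1 γ A E B hinv)
  rw [transpose_mul, transpose_neg, transpose_mul, transpose_mul, transpose_transpose, hE.eq,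
    Ssymm γ E B hE] at this
  rw [← Matrix.mul_assoc] at this
  exact this

/-- The Riccati-difference identity (equation (34) of the paper):
`W_c − W = −[(P − P_c) − (A − BF)ᵀ(E − E_c)(A − BF)] − (F_c − F)ᵀ(γI − BᵀE_cB)(F_c − F)`. -/
theorem riccati_difference_identity (n r : ℕ) (γ : ℝ)
    (A P Pc E Ec : Matrix (Fin n) (Fin n) ℝ)
    (B : Matrix (Fin n) (Fin r) ℝ) (C : Matrix (Fin r) (Fin n) ℝ)
    (hP : P.IsSymm) (hPc : Pc.IsSymm) (hE : E.IsSymm) (hEc : Ec.IsSymm)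
    (hinv : IsUnit (γ • (1 : Matrix (Fin r) (Fin r) ℝ) - Bᵀ * E * B))
    (hinvc : IsUnit (γ • (1 : Matrix (Fin r) (Fin r) ℝ) - Bᵀ * Ec * B)) :
    Wop γ A Pc Ec B C - Wop γ A P E B C =
      -((P - Pc) - (A - B * Fgain γ A B E)ᵀ * (E - Ec) * (A - B * Fgain γ A B E)) -
        (Fgain γ A B Ec - Fgain γ A B E)ᵀ *
          (γ • (1 : Matrix (Fin r) (Fin r) ℝ) - Bᵀ * Ec * B) *
          (Fgain γ A B Ec - Fgain γ A B E) := by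
  rw [Wop_eq, Wop_eq]
  exact riccati_aux A P Pc E Ec B C (Fgain γ A B E) (Fgain γ A B Ec)
    (γ • (1 : Matrix (Fin r) (Fin r) ℝ) - Bᵀ * E * B)
    (γ • (1 : Matrix (Fin r) (Fin r) ℝ) - Bᵀ * Ec * B)
    (γ • (1 : Matrix (Fin r) (Fin r) ℝ))
    (key1 γ A E B hinv) (key2 γ A E B hE hinv)
    (key1 γ A Ec B hinvc) (key2 γ A Ec B hEc hinvc)
    (sub_sub_cancel _ _).symm (sub_sub_cancel _ _).symm

end
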